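/- For ρ > 0, the improper integral f(ρ) = ∫_ρ^∞ sinh(ρ)/√(sinh²r − sinh²ρ) dr converges; moreover f is increasing in ρ, f(ρ) → 0 as ρ → 0⁺, and f(ρ) → π/2 as ρ → +∞. -/

import Mathlib

open MeasureTheory Set Real Filter Topology

noncomputable def f (ρ : ℝ) : ℝ :=
  ∫ r in Set.Ioi ρ, Real.sinh ρ / Real.sqrt (Real.sinh r ^ 2 - Real.sinh ρ ^ 2)

noncomputable def gf (ρ t : ℝ) : ℝ :=
  Real.sinh ρ / Real.sqrt (Real.sinh t * Real.sinh (2*ρ + t))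

noncomputable def hfun (t : ℝ) : ℝ := 1 / Real.sqrt (Real.exp (2*t) - 1)

lemma sinh_sq_sub' (ρ t : ℝ) :
    Real.sinh (t + ρ) ^ 2 - Real.sinh ρ ^ 2 = Real.sinh t * Real.sinh (2*ρ + t) := by
  rw [show 2*ρ + t = ρ + (t + ρ) by ring, Real.sinh_add ρ (t+ρ), Real.sinh_add t ρ,
    Real.cosh_add t ρ]
  nlinarith [Real.cosh_sq t, Real.cosh_sq ρ]

lemma addemb' (ρ : ℝ) : MeasurableEmbedding (fun x : ℝ => x + ρ) :=
  (Homeomorph.addRight ρ).isClosedEmbedding.measurableEmbedding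

lemma f_repr' (ρ : ℝ) : f ρ = ∫ t in Ioi (0:ℝ), gf ρ t := by
  have A := addemb' ρ
  unfold f
  nth_rewrite 1 [show (volume : Measure ℝ) = Measure.map (fun x => x + ρ) volume from
    (map_add_right_eq_self volume ρ).symm]
  rw [A.setIntegral_map]
  rw [show (fun x : ℝ => x + ρ) ⁻¹' (Ioi ρ) = Ioi 0 by ext x; simp]
  refine setIntegral_congr_fun measurableSet_Ioi fun x _ => ?_
  rw [sinh_sq_sub']
  rfl

lemma int_repr' (ρ : ℝ) :
    IntegrableOn (fun r : ℝ => Real.sinh ρ / Real.sqrt (Real.sinh r ^ 2 - Real.sinh ρ ^ 2))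
      (Ioi ρ) ↔ IntegrableOn (gf ρ) (Ioi 0) := by
  have A := addemb' ρ
  rw [show (volume : Measure ℝ) = Measure.map (fun x => x + ρ) volume from
    (map_add_right_eq_self volume ρ).symm, A.integrableOn_map_iff]
  rw [show (fun x : ℝ => x + ρ) ⁻¹' (Ioi ρ) = Ioi 0 by ext x; simp]
  have : ((fun r : ℝ => Real.sinh ρ / Real.sqrt (Real.sinh r ^ 2 - Real.sinh ρ ^ 2)) ∘
      (fun x => x + ρ)) = gf ρ := by
    funext x
    simp only [Function.comp_apply]
    rw [sinh_sq_sub']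
    rfl
  rw [this, map_add_right_eq_self volume ρ]

lemma gf_nonneg' {ρ t : ℝ} (hρ : 0 ≤ ρ) : 0 ≤ gf ρ t :=
  div_nonneg (Real.sinh_nonneg_iff.mpr hρ) (Real.sqrt_nonneg _)

lemma core_le' (ρ t : ℝ) (hρ : 0 < ρ) (ht : 0 < t) :
    Real.sinh ρ ^ 2 * (Real.exp (2*t) - 1) ≤ Real.sinh t * Real.sinh (2*ρ + t) := by
  have ha : 1 < Real.exp ρ := Real.one_lt_exp_iff.mpr hρ
  have hb : 1 < Real.exp t := Real.one_lt_exp_iff.mpr ht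
  have ha0 : (0:ℝ) < Real.exp ρ := Real.exp_pos ρ
  have hb0 : (0:ℝ) < Real.exp t := Real.exp_pos t
  rw [Real.sinh_eq, Real.sinh_eq, Real.sinh_eq,
      show 2*ρ + t = ρ + ρ + t by ring, show 2*t = t + t by ring]
  simp only [Real.exp_add, Real.exp_neg, neg_add_rev]
  set a := Real.exp ρ
  set b := Real.exp t
  have key : (b - b⁻¹) / 2 * ((a * a * b - b⁻¹ * (a⁻¹ * a⁻¹)) / 2) - ((a - a⁻¹)/2)^2 * (b*b - 1)
      = (b*b - 1)*(2*(a*a)*(b*b) - b*b - 1)/(4*a^2*b^2) := by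
    field_simp
    ring
  have h1 : (0:ℝ) ≤ (b*b - 1)*(2*(a*a)*(b*b) - b*b - 1)/(4*a^2*b^2) := by
    have haa : (1:ℝ) ≤ a*a := by nlinarith
    have hbb : (1:ℝ) ≤ b*b := by nlinarith
    have h2 : (0:ℝ) ≤ 2*(a*a)*(b*b) - b*b - 1 := by
      nlinarith [mul_nonneg (sub_nonneg.2 haa) (by positivity : (0:ℝ) ≤ 2*(b*b))]
    have h3 : (0:ℝ) ≤ (b*b-1) := by nlinarith
    positivity
  linarith [key, h1]

lemma gf_le_hfun' {ρ t : ℝ} (hρ : 0 < ρ) (ht : 0 < t) : gf ρ t ≤ hfun t := by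
  have hD : 0 < Real.sinh t * Real.sinh (2*ρ + t) :=
    mul_pos (Real.sinh_pos_iff.mpr ht) (Real.sinh_pos_iff.mpr (by linarith))
  have hE : (0:ℝ) < Real.exp (2*t) - 1 := by
    have : (1:ℝ) < Real.exp (2*t) := Real.one_lt_exp_iff.mpr (by linarith)
    linarith
  rw [gf, hfun, div_le_div_iff₀ (Real.sqrt_pos.mpr hD) (Real.sqrt_pos.mpr hE), one_mul]
  calc Real.sinh ρ * Real.sqrt (Real.exp (2*t) - 1)
      = Real.sqrt (Real.sinh ρ ^ 2 * (Real.exp (2*t) - 1)) := by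
        rw [Real.sqrt_mul (sq_nonneg _), Real.sqrt_sq (Real.sinh_nonneg_iff.mpr hρ.le)]
    _ ≤ Real.sqrt (Real.sinh t * Real.sinh (2*ρ + t)) :=
        Real.sqrt_le_sqrt (core_le' ρ t hρ ht)

set_option maxHeartbeats 1000000 in
lemma core_lt' (ρ₁ ρ₂ t : ℝ) (h1 : 0 < ρ₁) (h12 : ρ₁ < ρ₂) (ht : 0 < t) :
    Real.sinh ρ₁ ^ 2 * Real.sinh (2*ρ₂ + t) < Real.sinh ρ₂ ^ 2 * Real.sinh (2*ρ₁ + t) := by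
  have ha : 1 < Real.exp ρ₁ := Real.one_lt_exp_iff.mpr h1
  have hac : Real.exp ρ₁ < Real.exp ρ₂ := Real.exp_lt_exp.mpr h12
  have hb : 1 < Real.exp t := Real.one_lt_exp_iff.mpr ht
  have ha0 : (0:ℝ) < Real.exp ρ₁ := Real.exp_pos _
  have hc0 : (0:ℝ) < Real.exp ρ₂ := Real.exp_pos _
  have hb0 : (0:ℝ) < Real.exp t := Real.exp_pos _
  rw [Real.sinh_eq, Real.sinh_eq, Real.sinh_eq, Real.sinh_eq,
      show 2*ρ₁ + t = ρ₁ + ρ₁ + t by ring, show 2*ρ₂ + t = ρ₂ + ρ₂ + t by ring]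
  simp only [Real.exp_add, Real.exp_neg, neg_add_rev]
  set a := Real.exp ρ₁
  set c := Real.exp ρ₂
  set b := Real.exp t
  have key : ((c - c⁻¹)/2)^2 * ((a * a * b - b⁻¹ * (a⁻¹ * a⁻¹))/2)
      - ((a - a⁻¹)/2)^2 * ((c * c * b - b⁻¹ * (c⁻¹ * c⁻¹))/2)
      = ((c*c - a*a) * ((b*b)*(2*(a*a)*(c*c) - a*a - c*c) - (a*a + c*c - 2)))
        / (8*(a*a)*(c*c)*b) := by
    field_simp
    ring
  have hA : (1:ℝ) < a*a := by nlinarith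
  have hC : a*a < c*c := by nlinarith
  have hB : (1:ℝ) < b*b := by nlinarith
  have hnum : (0:ℝ) < (c*c - a*a) * ((b*b)*(2*(a*a)*(c*c) - a*a - c*c) - (a*a + c*c - 2)) := by
    have h2 : (0:ℝ) < 2*(a*a)*(c*c) - a*a - c*c := by
      nlinarith [mul_pos (sub_pos.2 hA) (sub_pos.2 (lt_trans hA hC))]
    have h3 : (0:ℝ) < (b*b)*(2*(a*a)*(c*c) - a*a - c*c) - (a*a + c*c - 2) := by
      nlinarith [mul_pos (sub_pos.2 hB) h2, mul_pos (sub_pos.2 hA) (sub_pos.2 (lt_trans hA hC))]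
    exact mul_pos (by linarith) h3
  have hden : (0:ℝ) < 8*(a*a)*(c*c)*b := by positivity
  linarith [key, div_pos hnum hden]

lemma gf_lt' {ρ₁ ρ₂ t : ℝ} (h1 : 0 < ρ₁) (h12 : ρ₁ < ρ₂) (ht : 0 < t) : gf ρ₁ t < gf ρ₂ t := by
  have hst : 0 < Real.sinh t := Real.sinh_pos_iff.mpr ht
  have hD1 : 0 < Real.sinh t * Real.sinh (2*ρ₁ + t) :=
    mul_pos hst (Real.sinh_pos_iff.mpr (by linarith))
  have hD2 : 0 < Real.sinh t * Real.sinh (2*ρ₂ + t) :=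
    mul_pos hst (Real.sinh_pos_iff.mpr (by linarith))
  rw [gf, gf, div_lt_div_iff₀ (Real.sqrt_pos.mpr hD1) (Real.sqrt_pos.mpr hD2)]
  have e1 : Real.sinh ρ₁ * Real.sqrt (Real.sinh t * Real.sinh (2*ρ₂ + t))
      = Real.sqrt (Real.sinh ρ₁ ^ 2 * (Real.sinh t * Real.sinh (2*ρ₂ + t))) := by
    rw [Real.sqrt_mul (sq_nonneg _), Real.sqrt_sq (Real.sinh_nonneg_iff.mpr h1.le)]
  have e2 : Real.sinh ρ₂ * Real.sqrt (Real.sinh t * Real.sinh (2*ρ₁ + t))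
      = Real.sqrt (Real.sinh ρ₂ ^ 2 * (Real.sinh t * Real.sinh (2*ρ₁ + t))) := by
    rw [Real.sqrt_mul (sq_nonneg _),
      Real.sqrt_sq (Real.sinh_nonneg_iff.mpr (by linarith : (0:ℝ) ≤ ρ₂))]
  rw [e1, e2]
  apply Real.sqrt_lt_sqrt (by positivity)
  nlinarith [core_lt' ρ₁ ρ₂ t h1 h12 ht, hst]

lemma Ffun_deriv' {x : ℝ} (hx : 0 < x) :
    HasDerivAt (fun t => Real.arctan (Real.sqrt (Real.exp (2*t) - 1))) (hfun x) x := by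
  have hu : (0:ℝ) < Real.exp (2*x) - 1 := by
    have : (1:ℝ) < Real.exp (2*x) := Real.one_lt_exp_iff.mpr (by linarith)
    linarith
  have d1 : HasDerivAt (fun t : ℝ => Real.exp (2*t) - 1) (2 * Real.exp (2*x)) x := by
    have := (Real.hasDerivAt_exp (2*x)).comp x ((hasDerivAt_id x).const_mul 2)
    simpa [mul_comm] using this.sub_const 1
  have d2 : HasDerivAt (fun t : ℝ => Real.sqrt (Real.exp (2*t) - 1))
      (1 / (2 * Real.sqrt (Real.exp (2*x) - 1)) * (2 * Real.exp (2*x))) x :=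
    (Real.hasDerivAt_sqrt hu.ne').comp x d1
  have d3 := (Real.hasDerivAt_arctan (Real.sqrt (Real.exp (2*x) - 1))).comp x d2
  convert d3 using 1
  · rfl
  · rfl
  · rfl
  have hs : Real.sqrt (Real.exp (2*x) - 1) ^ 2 = Real.exp (2*x) - 1 := Real.sq_sqrt hu.le
  have hsp : (0:ℝ) < Real.sqrt (Real.exp (2*x) - 1) := Real.sqrt_pos.mpr hu
  rw [hfun, hs]
  field_simp
  ring

lemma Ffun_tendsto' :
    Tendsto (fun t => Real.arctan (Real.sqrt (Real.exp (2*t) - 1))) atTop (𝓝 (π/2)) := by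
  have h1 : Tendsto (fun t : ℝ => Real.exp (2*t) - 1) atTop atTop :=
    tendsto_atTop_add_const_right _ _
      (Real.tendsto_exp_atTop.comp (tendsto_id.const_mul_atTop two_pos))
  have hsq : Tendsto Real.sqrt atTop atTop := by
    rw [tendsto_atTop_atTop]
    intro b
    refine ⟨b^2, fun a ha => ?_⟩
    nlinarith [Real.sq_sqrt (le_trans (sq_nonneg b) ha), Real.sqrt_nonneg a]
  exact (Real.tendsto_arctan_atTop.mono_right nhdsWithin_le_nhds).comp (hsq.comp h1)

lemma hfun_int' : IntegrableOn hfun (Ioi (0:ℝ)) ∧ ∫ t in Ioi (0:ℝ), hfun t = π/2 := by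
  have hcont : ContinuousWithinAt (fun t => Real.arctan (Real.sqrt (Real.exp (2*t) - 1)))
      (Ici 0) 0 :=
    (Real.continuous_arctan.comp (Real.continuous_sqrt.comp (by continuity))).continuousWithinAt
  have hderiv : ∀ x ∈ Ioi (0:ℝ),
      HasDerivAt (fun t => Real.arctan (Real.sqrt (Real.exp (2*t) - 1))) (hfun x) x :=
    fun x hx => Ffun_deriv' hx
  have hpos : ∀ x ∈ Ioi (0:ℝ), 0 ≤ hfun x := fun x _ => by unfold hfun; positivity
  refine ⟨integrableOn_Ioi_deriv_of_nonneg hcont hderiv hpos Ffun_tendsto', ?_⟩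
  rw [integral_Ioi_of_hasDerivAt_of_nonneg hcont hderiv hpos Ffun_tendsto']
  norm_num

lemma gf_tendsto_zero' {t : ℝ} (ht : 0 < t) :
    Tendsto (fun ρ => gf ρ t) (𝓝[>] (0:ℝ)) (𝓝 0) := by
  have hst : 0 < Real.sinh t := Real.sinh_pos_iff.mpr ht
  have hc : Continuous (fun ρ : ℝ => Real.sqrt (Real.sinh t * Real.sinh (2*ρ + t))) :=
    (continuous_const.mul (Real.continuous_sinh.comp (by continuity))).sqrt
  have hd : Tendsto (fun ρ : ℝ => Real.sqrt (Real.sinh t * Real.sinh (2*ρ + t))) (𝓝 0)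
      (𝓝 (Real.sinh t)) := by
    have := hc.tendsto 0
    simpa [Real.sqrt_mul_self hst.le] using this
  have hn : Tendsto (fun ρ : ℝ => Real.sinh ρ) (𝓝 0) (𝓝 0) := by
    simpa using Real.continuous_sinh.tendsto 0
  have h0 := Tendsto.mono_left (hn.div hd hst.ne')
    (nhdsWithin_le_nhds : 𝓝[>] (0:ℝ) ≤ 𝓝 0)
  simpa [gf, zero_div, Pi.div_def] using h0

lemma gf_tendsto_hfun' {t : ℝ} (ht : 0 < t) :
    Tendsto (fun ρ => gf ρ t) atTop (𝓝 (hfun t)) := by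
  have hst : 0 < Real.sinh t := Real.sinh_pos_iff.mpr ht
  set N : ℝ → ℝ := fun ρ => (1 - Real.exp (-(2*ρ)))/2 with hN
  set M : ℝ → ℝ := fun ρ =>
    Real.sinh t * ((Real.exp t - Real.exp (-(2*ρ))^2 * Real.exp (-t))/2) with hM
  have heq : ∀ ρ : ℝ, 0 < ρ → gf ρ t = N ρ / Real.sqrt (M ρ) := by
    intro ρ hρ
    have hD : 0 < Real.sinh t * Real.sinh (2*ρ + t) :=
      mul_pos hst (Real.sinh_pos_iff.mpr (by linarith))
    have e1 : N ρ = Real.sinh ρ * Real.exp (-ρ) := by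
      rw [hN]
      simp only
      rw [Real.sinh_eq, show -(2*ρ) = -ρ + -ρ by ring, Real.exp_add, Real.exp_neg]
      have hx := Real.exp_ne_zero ρ
      rw [div_mul_eq_mul_div, sub_mul, mul_inv_cancel₀ hx]
    have e2 : M ρ = (Real.sinh t * Real.sinh (2*ρ + t)) * (Real.exp (-ρ))^2 := by
      rw [hM]
      simp only
      rw [Real.sinh_eq (2*ρ+t), show 2*ρ+t = ρ+ρ+t by ring, show -(2*ρ) = -ρ + -ρ by ring]
      simp only [Real.exp_add, Real.exp_neg, neg_add_rev]
      field_simp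
    rw [e1, e2, Real.sqrt_mul hD.le, Real.sqrt_sq (Real.exp_pos _).le,
      mul_div_mul_right _ _ (Real.exp_ne_zero (-ρ)), gf]
  have hexp0 : Tendsto (fun ρ : ℝ => Real.exp (-(2*ρ))) atTop (𝓝 0) := by
    apply Real.tendsto_exp_atBot.comp
    have h2 : Tendsto (fun ρ : ℝ => 2*ρ) atTop atTop := tendsto_id.const_mul_atTop two_pos
    exact tendsto_neg_atTop_atBot.comp h2
  have hNlim : Tendsto N atTop (𝓝 (1/2)) := by
    rw [hN]
    have := ((tendsto_const_nhds : Tendsto (fun _ : ℝ => (1:ℝ)) atTop (𝓝 1)).sub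
      hexp0).div_const (2:ℝ)
    simpa using this
  have hMlim : Tendsto M atTop (𝓝 (Real.sinh t * Real.exp t / 2)) := by
    rw [hM]
    have : Tendsto (fun ρ : ℝ => Real.exp (-(2*ρ))^2 * Real.exp (-t)) atTop (𝓝 0) := by
      simpa using ((hexp0.pow 2).mul_const (Real.exp (-t)))
    have h4 := ((tendsto_const_nhds :
      Tendsto (fun _ : ℝ => Real.exp t) atTop (𝓝 (Real.exp t))).sub this).div_const (2:ℝ)
    have h5 := (tendsto_const_nhds :
      Tendsto (fun _ : ℝ => Real.sinh t) atTop (𝓝 (Real.sinh t))).mul h4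
    simpa [mul_div_assoc] using h5
  have hX : (0:ℝ) < Real.sinh t * Real.exp t / 2 := by positivity
  have hsqrtM : Tendsto (fun ρ => Real.sqrt (M ρ)) atTop
      (𝓝 (Real.sqrt (Real.sinh t * Real.exp t / 2))) :=
    (Real.continuous_sqrt.tendsto _).comp hMlim
  have hlim : Tendsto (fun ρ => N ρ / Real.sqrt (M ρ)) atTop
      (𝓝 ((1/2) / Real.sqrt (Real.sinh t * Real.exp t / 2))) :=
    hNlim.div hsqrtM (by positivity)
  have hval : (1/2) / Real.sqrt (Real.sinh t * Real.exp t / 2) = hfun t := by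
    rw [hfun]
    have he : Real.exp (2*t) - 1 = 4 * (Real.sinh t * Real.exp t / 2) := by
      rw [Real.sinh_eq, show 2*t = t+t by ring, Real.exp_add, Real.exp_neg]
      field_simp
      ring
    rw [he, Real.sqrt_mul (by norm_num : (0:ℝ) ≤ 4),
      show Real.sqrt 4 = 2 by rw [show (4:ℝ) = 2^2 by norm_num, Real.sqrt_sq two_pos.le]]
    rw [div_div]
  rw [← hval]
  apply hlim.congr'
  filter_upwards [eventually_gt_atTop (0:ℝ)] with ρ hρ
  exact (heq ρ hρ).symm

lemma gf_meas' (ρ : ℝ) : AEStronglyMeasurable (gf ρ) (volume.restrict (Ioi (0:ℝ))) := by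
  apply Measurable.aestronglyMeasurable
  apply Measurable.div measurable_const
  exact ((Real.continuous_sinh.mul (Real.continuous_sinh.comp (by continuity))).sqrt).measurable

lemma gf_int' {ρ : ℝ} (hρ : 0 < ρ) : IntegrableOn (gf ρ) (Ioi (0:ℝ)) := by
  refine Integrable.mono' hfun_int'.1 (gf_meas' ρ) ?_
  refine (ae_restrict_iff' measurableSet_Ioi).2 (Eventually.of_forall fun t ht => ?_)
  rw [Real.norm_eq_abs, abs_of_nonneg (gf_nonneg' hρ.le)]
  exact gf_le_hfun' hρ ht

theorem stmt_6 :
    (∀ ρ : ℝ, 0 < ρ →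
      IntegrableOn (fun r : ℝ => Real.sinh ρ / Real.sqrt (Real.sinh r ^ 2 - Real.sinh ρ ^ 2))
        (Set.Ioi ρ)) ∧
    StrictMonoOn f (Set.Ioi (0 : ℝ)) ∧
    Tendsto f (𝓝[>] (0 : ℝ)) (𝓝 0) ∧
    Tendsto f atTop (𝓝 (Real.pi / 2)) := by
  have hfrepr : f = fun ρ => ∫ t in Ioi (0:ℝ), gf ρ t := funext f_repr'
  refine ⟨fun ρ hρ => (int_repr' ρ).2 (gf_int' hρ), ?_, ?_, ?_⟩
  · -- strict monotonicity
    intro ρ₁ h₁ ρ₂ h₂ h12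
    rw [mem_Ioi] at h₁ h₂
    rw [f_repr', f_repr']
    have hkey : 0 < ∫ t in Ioi (0:ℝ), (gf ρ₂ t - gf ρ₁ t) := by
      rw [setIntegral_pos_iff_support_of_nonneg_ae
        ((ae_restrict_iff' measurableSet_Ioi).2 (Eventually.of_forall fun t ht =>
          sub_nonneg.2 (gf_lt' h₁ h12 ht).le))
        ((gf_int' h₂).sub (gf_int' h₁))]
      have hsub : Ioi (0:ℝ) ⊆ Function.support (fun t => gf ρ₂ t - gf ρ₁ t) ∩ Ioi 0 :=
        fun t ht => ⟨ne_of_gt (sub_pos.2 (gf_lt' h₁ h12 ht)), ht⟩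
      calc (0 : ENNReal) < volume (Ioi (0:ℝ)) := by rw [Real.volume_Ioi]; exact ENNReal.zero_lt_top
        _ ≤ _ := measure_mono hsub
    rw [integral_sub (gf_int' h₂) (gf_int' h₁)] at hkey
    linarith
  · -- limit at 0⁺
    rw [hfrepr]
    have := tendsto_integral_filter_of_dominated_convergence
      (μ := volume.restrict (Ioi (0:ℝ))) (l := 𝓝[>] (0:ℝ))
      (F := fun ρ => gf ρ) (f := fun _ : ℝ => (0:ℝ)) hfun
      (Eventually.of_forall gf_meas')
      (by
        filter_upwards [self_mem_nhdsWithin] with ρ hρ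
        rw [mem_Ioi] at hρ
        refine (ae_restrict_iff' measurableSet_Ioi).2 (Eventually.of_forall fun t ht => ?_)
        rw [Real.norm_eq_abs, abs_of_nonneg (gf_nonneg' hρ.le)]
        exact gf_le_hfun' hρ ht)
      hfun_int'.1
      ((ae_restrict_iff' measurableSet_Ioi).2 (Eventually.of_forall fun t ht =>
        gf_tendsto_zero' ht))
    simpa using this
  · -- limit at ∞
    rw [hfrepr]
    have := tendsto_integral_filter_of_dominated_convergence
      (μ := volume.restrict (Ioi (0:ℝ))) (l := atTop)
      (F := fun ρ => gf ρ) (f := hfun) hfun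
      (Eventually.of_forall gf_meas')
      (by
        filter_upwards [eventually_gt_atTop (0:ℝ)] with ρ hρ
        refine (ae_restrict_iff' measurableSet_Ioi).2 (Eventually.of_forall fun t ht => ?_)
        rw [Real.norm_eq_abs, abs_of_nonneg (gf_nonneg' hρ.le)]
        exact gf_le_hfun' hρ ht)
      hfun_int'.1
      ((ae_restrict_iff' measurableSet_Ioi).2 (Eventually.of_forall fun t ht =>
        gf_tendsto_hfun' ht))
    rwa [hfun_int'.2] at this
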